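/- Let Γ be a connected n-vertex graph with exactly three distinct distance eigenvalues δ_0 > δ_1 > δ_2 having multiplicities 1, m_1, m_2 with m_1 = m_2 = m ≥ 2. Then n = 2m+1 is odd and δ_0 = c(n-1)/2 for some integer c ≥ 3. -/

import Mathlib

open SimpleGraph Matrix Finset

/-- The distance matrix of a graph, with real entries. -/
noncomputable def distMatrix {V : Type*} [Fintype V] (G : SimpleGraph V) : Matrix V V ℝ :=
  Matrix.of fun x y => (G.dist x y : ℝ)

lemma distMatrix_isHermitian {V : Type*} [Fintype V] (G : SimpleGraph V) :
    (distMatrix G).IsHermitian := by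
  ext x y
  simp [distMatrix, Matrix.conjTranspose_apply, SimpleGraph.dist_comm]

/-- The multiset of eigenvalues (with multiplicity) of the distance matrix of `G`. -/
noncomputable def distSpec {V : Type*} [Fintype V] [DecidableEq V] (G : SimpleGraph V) :
    Multiset ℝ :=
  Finset.univ.val.map (distMatrix_isHermitian G).eigenvalues

open Polynomial in
lemma charpoly_conj_units {n R : Type*} [DecidableEq n] [Fintype n] [CommRing R]
    (P Q M : Matrix n n R) (hPQ : P * Q = 1) (hQP : Q * P = 1) :
    (P * M * Q).charpoly = M.charpoly := by
  unfold Matrix.charpoly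
  have e2 : (C : R →+* R[X]).mapMatrix P * (C : R →+* R[X]).mapMatrix Q
      = (C : R →+* R[X]).mapMatrix (P * Q) := (RingHom.map_mul _ _ _).symm
  have e3 : (C : R →+* R[X]).mapMatrix Q * (C : R →+* R[X]).mapMatrix P
      = (C : R →+* R[X]).mapMatrix (Q * P) := (RingHom.map_mul _ _ _).symm
  have key : charmatrix (P * M * Q) =
      (C : R →+* R[X]).mapMatrix P * charmatrix M * (C : R →+* R[X]).mapMatrix Q := by
    unfold charmatrix
    rw [mul_sub, sub_mul]
    congr 1
    · have h1 : (C : R →+* R[X]).mapMatrix P * Matrix.scalar n (X : R[X]) =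
          Matrix.scalar n (X : R[X]) * (C : R →+* R[X]).mapMatrix P :=
        (Matrix.scalar_commute (X : R[X]) (fun r' => Commute.all _ _) _).symm
      rw [h1, mul_assoc, e2, hPQ, _root_.map_one, mul_one]
    · rw [(RingHom.map_mul ((C : R →+* R[X]).mapMatrix) P M).symm,
        (RingHom.map_mul ((C : R →+* R[X]).mapMatrix) (P*M) Q).symm]
  have hdet : ((C : R →+* R[X]).mapMatrix Q).det * ((C : R →+* R[X]).mapMatrix P).det = 1 := by
    rw [← det_mul, e3, hQP, _root_.map_one, det_one]
  rw [key, det_mul, det_mul,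
    show ((C : R →+* R[X]).mapMatrix P).det * (charmatrix M).det * ((C : R →+* R[X]).mapMatrix Q).det
      = (charmatrix M).det * (((C : R →+* R[X]).mapMatrix Q).det * ((C : R →+* R[X]).mapMatrix P).det)
      from by ring, hdet, mul_one]

open Polynomial in
lemma charpoly_diagonal' {n R : Type*} [DecidableEq n] [Fintype n] [CommRing R] (d : n → R) :
    (Matrix.diagonal d).charpoly = ∏ i, (X - C (d i)) := by
  unfold Matrix.charpoly
  have : charmatrix (Matrix.diagonal d) = Matrix.diagonal fun i => (X : R[X]) - C (d i) := by
    ext i j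
    by_cases h : i = j
    · subst h; simp [charmatrix_apply_eq]
    · simp [charmatrix_apply_ne _ _ _ h, Matrix.diagonal_apply_ne _ h]
  rw [this, det_diagonal]

lemma ofReal_comp_eigenvalues {n : Type*} [DecidableEq n] [Fintype n] {A : Matrix n n ℝ}
    (hA : A.IsHermitian) :
    (RCLike.ofReal : ℝ → ℝ) ∘ hA.eigenvalues = hA.eigenvalues := by
  funext i
  simp [Function.comp]

open Polynomial in
lemma charpoly_hermitian {n : Type*} [DecidableEq n] [Fintype n] {A : Matrix n n ℝ}
    (hA : A.IsHermitian) : A.charpoly = ∏ i, (X - C (hA.eigenvalues i)) := by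
  have hst := hA.spectral_theorem
  have h1 : (hA.eigenvectorUnitary : Matrix n n ℝ) * (star (hA.eigenvectorUnitary : Matrix n n ℝ)) = 1 :=
    (Matrix.mem_unitaryGroup_iff).mp hA.eigenvectorUnitary.2
  have h2 : (star (hA.eigenvectorUnitary : Matrix n n ℝ)) * (hA.eigenvectorUnitary : Matrix n n ℝ) = 1 :=
    (Matrix.mem_unitaryGroup_iff').mp hA.eigenvectorUnitary.2
  have hdiag : (Matrix.diagonal ((RCLike.ofReal : ℝ → ℝ) ∘ hA.eigenvalues)) = Matrix.diagonal hA.eigenvalues := by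
    rw [ofReal_comp_eigenvalues]
  calc A.charpoly
      = ((hA.eigenvectorUnitary : Matrix n n ℝ) * (Matrix.diagonal hA.eigenvalues)
          * (star (hA.eigenvectorUnitary : Matrix n n ℝ))).charpoly := by
          simp only [Unitary.conjStarAlgAut_apply, Unitary.coe_star] at hst; rw [← hdiag, ← hst]
    _ = (Matrix.diagonal hA.eigenvalues).charpoly := charpoly_conj_units _ _ _ h1 h2
    _ = ∏ i, (X - C (hA.eigenvalues i)) := charpoly_diagonal' _

lemma trace_eq_sum_eigs {n : Type*} [Fintype n] [DecidableEq n] {A : Matrix n n ℝ}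
    (hA : A.IsHermitian) : A.trace = ∑ i, hA.eigenvalues i := by
  have h2 : (star (hA.eigenvectorUnitary : Matrix n n ℝ)) * (hA.eigenvectorUnitary : Matrix n n ℝ) = 1 :=
    (Matrix.mem_unitaryGroup_iff').mp hA.eigenvectorUnitary.2
  calc A.trace
      = ((hA.eigenvectorUnitary : Matrix n n ℝ) * (Matrix.diagonal ((RCLike.ofReal : ℝ → ℝ) ∘ hA.eigenvalues))
          * (star (hA.eigenvectorUnitary : Matrix n n ℝ))).trace := by
          have hst := hA.spectral_theorem
          simp only [Unitary.conjStarAlgAut_apply, Unitary.coe_star] at hst; rw [← hst]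
    _ = ∑ i, hA.eigenvalues i := by
        rw [Matrix.trace_mul_cycle, h2, one_mul, ofReal_comp_eigenvalues, Matrix.trace_diagonal]

lemma quadform_le_sup_eig {n : Type*} [Fintype n] [DecidableEq n] {A : Matrix n n ℝ}
    (hA : A.IsHermitian) {μ : ℝ} (hμ : ∀ i, hA.eigenvalues i ≤ μ) (v : n → ℝ) :
    v ⬝ᵥ (A *ᵥ v) ≤ μ * (v ⬝ᵥ v) := by
  classical
  set U : Matrix n n ℝ := (hA.eigenvectorUnitary : Matrix n n ℝ) with hU
  have h1 : U * star U = 1 := (Matrix.mem_unitaryGroup_iff).mp hA.eigenvectorUnitary.2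
  have hstar : star U = U.transpose := by
    ext i j
    simp [Matrix.star_apply]
  set w : n → ℝ := v ᵥ* U with hw
  have hsUv : star U *ᵥ v = w := by
    rw [hstar, Matrix.mulVec_transpose, hw]
  have key : v ⬝ᵥ (A *ᵥ v) = ∑ i, hA.eigenvalues i * (w i)^2 := by
    conv_lhs => rw [hA.spectral_theorem, ofReal_comp_eigenvalues]; simp only [Unitary.conjStarAlgAut_apply, Unitary.coe_star]
    rw [← Matrix.mulVec_mulVec, ← Matrix.mulVec_mulVec, hsUv, dotProduct_mulVec, ← hw]
    unfold dotProduct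
    refine Finset.sum_congr rfl fun i _ => ?_
    rw [Matrix.mulVec_diagonal]
    ring
  have hww : w ⬝ᵥ w = v ⬝ᵥ v := by
    calc w ⬝ᵥ w = v ᵥ* U ⬝ᵥ (Uᵀ *ᵥ v) := by rw [Matrix.mulVec_transpose, ← hw]
      _ = v ⬝ᵥ (U *ᵥ (Uᵀ *ᵥ v)) := (dotProduct_mulVec v U _).symm
      _ = v ⬝ᵥ ((U * Uᵀ) *ᵥ v) := by rw [Matrix.mulVec_mulVec]
      _ = v ⬝ᵥ v := by rw [← hstar, h1, Matrix.one_mulVec]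
  have hsum : ∑ i, hA.eigenvalues i * (w i)^2 ≤ ∑ i, μ * (w i)^2 :=
    Finset.sum_le_sum fun i _ => mul_le_mul_of_nonneg_right (hμ i) (sq_nonneg _)
  have hww' : ∑ i, (w i)^2 = v ⬝ᵥ v := by
    rw [← hww]; unfold dotProduct; exact Finset.sum_congr rfl fun i _ => sq (w i)
  rw [key]
  calc ∑ i, hA.eigenvalues i * (w i)^2 ≤ ∑ i, μ * (w i)^2 := hsum
    _ = μ * ∑ i, (w i)^2 := by rw [Finset.mul_sum]
    _ = μ * (v ⬝ᵥ v) := by rw [hww']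

theorem dcube_stmt11 {V : Type*} [Fintype V] [DecidableEq V] (G : SimpleGraph V)
    (hconn : G.Connected) (δ0 δ1 δ2 : ℝ) (h21 : δ2 < δ1) (h10 : δ1 < δ0)
    (hspec : (distSpec G).toFinset = {δ0, δ1, δ2})
    (m : ℕ) (hm : 2 ≤ m)
    (h0 : (distSpec G).count δ0 = 1)
    (h1 : (distSpec G).count δ1 = m)
    (h2 : (distSpec G).count δ2 = m) :
    Fintype.card V = 2 * m + 1 ∧
      ∃ c : ℤ, 3 ≤ c ∧ δ0 = (c : ℝ) * ((Fintype.card V : ℝ) - 1) / 2 := by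
  classical
  have hA := distMatrix_isHermitian G
  set A := distMatrix G with hAdef
  set e := hA.eigenvalues with hedef
  set n := Fintype.card V with hn
  haveI : Nonempty V := hconn.nonempty
  have hnpos : 0 < n := Fintype.card_pos
  -- distinctness
  have hne01 : δ0 ≠ δ1 := ne_of_gt h10
  have hne02 : δ0 ≠ δ2 := ne_of_gt (h21.trans h10)
  have hne12 : δ1 ≠ δ2 := ne_of_gt h21
  have h0notin : δ0 ∉ ({δ1, δ2} : Finset ℝ) := by simp [hne01, hne02]
  have h1notin : δ1 ∉ ({δ2} : Finset ℝ) := by simp [hne12]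
  -- cardinality : n = 2m+1
  have hcard : Multiset.card (distSpec G) = n := by simp [distSpec, hn]
  have hcount := Multiset.toFinset_sum_count_eq (distSpec G)
  rw [hspec, Finset.sum_insert h0notin, Finset.sum_insert h1notin, Finset.sum_singleton,
    h0, h1, h2, hcard] at hcount
  have hncard : n = 2 * m + 1 := by omega
  refine ⟨hncard, ?_⟩
  -- trace facts
  have htr0 : A.trace = 0 := by
    have : ∀ x : V, A x x = 0 := fun x => by
      simp [hAdef, distMatrix]
    simp [Matrix.trace, Matrix.diag, this]
  have hsumeig : ∑ i, e i = δ0 + (m : ℝ) * δ1 + (m : ℝ) * δ2 := by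
    have h' : ∑ i, e i = (distSpec G).sum := by
      rw [Finset.sum_eq_multiset_sum]
      simp [distSpec]
      rfl
    have h'' := Finset.sum_multiset_map_count (distSpec G) (id : ℝ → ℝ)
    rw [Multiset.map_id] at h''
    rw [h', h'', hspec, Finset.sum_insert h0notin, Finset.sum_insert h1notin,
      Finset.sum_singleton, h0, h1, h2]
    simp [nsmul_eq_mul]
    ring
  have htrace : δ0 + (m : ℝ) * δ1 + (m : ℝ) * δ2 = 0 := by
    rw [← hsumeig, ← trace_eq_sum_eigs hA, htr0]
  -- membership facts
  have hmem : ∀ i, e i = δ0 ∨ e i = δ1 ∨ e i = δ2 := by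
    intro i
    have : e i ∈ distSpec G := Multiset.mem_map_of_mem _ (Finset.mem_univ i)
    have h' : e i ∈ (distSpec G).toFinset := Multiset.mem_toFinset.mpr this
    rw [hspec] at h'
    simpa using h'
  have hex : ∀ δ : ℝ, (distSpec G).count δ ≠ 0 → ∃ i, e i = δ := by
    intro δ hδ
    have : δ ∈ distSpec G := by
      by_contra h
      exact hδ (Multiset.count_eq_zero_of_notMem h)
    obtain ⟨i, _, hi⟩ := Multiset.mem_map.mp this
    exact ⟨i, hi⟩
  -- the graph is not complete
  have hnotcomplete : ∃ x y : V, x ≠ y ∧ ¬ G.Adj x y := by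
    by_contra hcon
    push_neg at hcon
    have hadj : ∀ x y : V, x ≠ y → G.Adj x y := hcon
    have hdich : ∀ δ : ℝ, (∃ i, e i = δ) → δ = -1 ∨ δ = (n : ℝ) - 1 := by
      rintro δ ⟨i, hi⟩
      set v : V → ℝ := ⇑(hA.eigenvectorBasis i) with hv
      have hvne : v ≠ 0 := by
        have h1 : hA.eigenvectorBasis i ≠ 0 :=
          (hA.eigenvectorBasis.orthonormal).ne_zero i
        intro h
        apply h1
        ext x
        exact congrFun h x
      have hveq : A *ᵥ v = δ • v := by
        have h' := hA.mulVec_eigenvectorBasis i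
        rw [← hedef, hi] at h'
        exact h'
      set S : ℝ := ∑ y, v y with hS
      have hAxy : ∀ x y : V, A x y = if x = y then 0 else 1 := by
        intro x y
        by_cases h : x = y
        · simp [h, hAdef, distMatrix]
        · have : G.dist x y = 1 := SimpleGraph.dist_eq_one_iff_adj.mpr (hadj x y h)
          simp [h, hAdef, distMatrix, this]
      have hmv : ∀ x : V, δ * v x = S - v x := by
        intro x
        have h1 : (A *ᵥ v) x = δ * v x := by rw [hveq]; simp
        have h2 : (A *ᵥ v) x = S - v x := by
          unfold Matrix.mulVec dotProduct
          have : ∀ y : V, A x y * v y = v y - (if x = y then v y else 0) := by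
            intro y
            rw [hAxy x y]
            by_cases h : x = y <;> simp [h]
          rw [Finset.sum_congr rfl fun y _ => this y, Finset.sum_sub_distrib,
            Finset.sum_ite_eq univ x v, if_pos (Finset.mem_univ x), hS]
        rw [← h1, h2]
      by_cases hδ1 : δ = -1
      · left; exact hδ1
      right
      have hδne : δ + 1 ≠ 0 := fun h => hδ1 (by linarith)
      have hvconst : ∀ x : V, v x = S / (δ + 1) := by
        intro x
        have := hmv x
        field_simp
        linarith
      have hSne : S ≠ 0 := by
        intro h
        apply hvne
        ext x
        rw [hvconst x, h, zero_div]
        rfl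
      have hSn : S = (n : ℝ) * (S / (δ + 1)) := by
        conv_lhs => rw [hS, Finset.sum_congr rfl fun x _ => hvconst x]
        rw [Finset.sum_const, Finset.card_univ, ← hn, nsmul_eq_mul]
      have : δ + 1 = (n : ℝ) := by
        field_simp at hSn
        have h' : S * ((n : ℝ) - (δ + 1)) = 0 := by linear_combination -S * hSn
        rcases mul_eq_zero.mp h' with h | h
        · exact absurd h hSne
        · linarith
      linarith
    have hd0 := hdich δ0 (hex δ0 (by rw [h0]; omega))
    have hd1 := hdich δ1 (hex δ1 (by rw [h1]; omega))
    have hd2 := hdich δ2 (hex δ2 (by rw [h2]; omega))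
    rcases hd0 with h | h <;> rcases hd1 with h' | h' <;> rcases hd2 with h'' | h'' <;> linarith
  -- lower bound on sum of distances
  obtain ⟨x₀, y₀, hxy, hnadj⟩ := hnotcomplete
  have hdistpos : ∀ x y : V, x ≠ y → 1 ≤ G.dist x y := fun x y h =>
    hconn.pos_dist_of_ne h
  have hd2' : 2 ≤ G.dist x₀ y₀ := by
    have h1 := hdistpos x₀ y₀ hxy
    have h2 : G.dist x₀ y₀ ≠ 1 := fun h => hnadj (SimpleGraph.dist_eq_one_iff_adj.mp h)
    omega
  have hrow : ∀ x : V, (n : ℝ) - 1 ≤ ∑ y, (G.dist x y : ℝ) := by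
    intro x
    have hsplit : ∑ y ∈ univ.erase x, (G.dist x y : ℝ) + (G.dist x x : ℝ) = ∑ y, (G.dist x y : ℝ) :=
      Finset.sum_erase_add univ _ (Finset.mem_univ x)
    have hbound : ∑ y ∈ univ.erase x, (1 : ℝ) ≤ ∑ y ∈ univ.erase x, (G.dist x y : ℝ) := by
      refine Finset.sum_le_sum fun y hy => ?_
      have hyx : y ≠ x := (Finset.mem_erase.mp hy).1
      exact_mod_cast hdistpos x y (Ne.symm hyx)
    rw [Finset.sum_const, Finset.card_erase_of_mem (Finset.mem_univ x), Finset.card_univ] at hbound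
    have : ((n - 1 : ℕ) : ℝ) = (n : ℝ) - 1 := by
      rw [Nat.cast_sub hnpos]
      simp
    simp only [nsmul_eq_mul, mul_one] at hbound
    rw [← hn] at hbound
    rw [this] at hbound
    have hxx : (G.dist x x : ℝ) = 0 := by simp
    linarith
  have hrow0 : (n : ℝ) ≤ ∑ y, (G.dist x₀ y : ℝ) := by
    have hsplit : ∑ y ∈ univ.erase y₀, (G.dist x₀ y : ℝ) + (G.dist x₀ y₀ : ℝ)
        = ∑ y, (G.dist x₀ y : ℝ) := Finset.sum_erase_add univ _ (Finset.mem_univ y₀)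
    have hsplit2 : ∑ y ∈ (univ.erase y₀).erase x₀, (G.dist x₀ y : ℝ) + (G.dist x₀ x₀ : ℝ)
        = ∑ y ∈ univ.erase y₀, (G.dist x₀ y : ℝ) := by
      refine Finset.sum_erase_add _ _ ?_
      exact Finset.mem_erase.mpr ⟨hxy, Finset.mem_univ x₀⟩
    have hbound : ∑ y ∈ (univ.erase y₀).erase x₀, (1 : ℝ)
        ≤ ∑ y ∈ (univ.erase y₀).erase x₀, (G.dist x₀ y : ℝ) := by
      refine Finset.sum_le_sum fun y hy => ?_
      have hyx : y ≠ x₀ := (Finset.mem_erase.mp hy).1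
      exact_mod_cast hdistpos x₀ y (Ne.symm hyx)
    have hcard2 : ((univ.erase y₀).erase x₀).card = n - 2 := by
      rw [Finset.card_erase_of_mem (Finset.mem_erase.mpr ⟨hxy, Finset.mem_univ x₀⟩),
        Finset.card_erase_of_mem (Finset.mem_univ y₀), Finset.card_univ, ← hn]
      omega
    rw [Finset.sum_const, hcard2] at hbound
    have hn2 : 2 ≤ n := by
      have : x₀ ∈ univ.erase y₀ := Finset.mem_erase.mpr ⟨hxy, Finset.mem_univ x₀⟩
      have h' : 1 ≤ (univ.erase y₀).card := Finset.card_pos.mpr ⟨x₀, this⟩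
      rw [Finset.card_erase_of_mem (Finset.mem_univ y₀), Finset.card_univ, ← hn] at h'
      omega
    have hcast : ((n - 2 : ℕ) : ℝ) = (n : ℝ) - 2 := by
      rw [Nat.cast_sub hn2]
      simp
    simp only [nsmul_eq_mul, mul_one] at hbound
    rw [hcast] at hbound
    have hxx : (G.dist x₀ x₀ : ℝ) = 0 := by simp
    have hdd : (2 : ℝ) ≤ (G.dist x₀ y₀ : ℝ) := by exact_mod_cast hd2'
    linarith
  have hStotal : (n : ℝ) * ((n : ℝ) - 1) + 1 ≤ ∑ x, ∑ y, (G.dist x y : ℝ) := by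
    have hsplit : ∑ x ∈ univ.erase x₀, (∑ y, (G.dist x y : ℝ)) + ∑ y, (G.dist x₀ y : ℝ)
        = ∑ x, ∑ y, (G.dist x y : ℝ) := Finset.sum_erase_add univ _ (Finset.mem_univ x₀)
    have hbound : ∑ x ∈ univ.erase x₀, ((n : ℝ) - 1) ≤ ∑ x ∈ univ.erase x₀, (∑ y, (G.dist x y : ℝ)) :=
      Finset.sum_le_sum fun x _ => hrow x
    rw [Finset.sum_const, Finset.card_erase_of_mem (Finset.mem_univ x₀), Finset.card_univ,
      ← hn] at hbound
    have hcast : ((n - 1 : ℕ) : ℝ) = (n : ℝ) - 1 := by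
      rw [Nat.cast_sub hnpos]; simp
    rw [nsmul_eq_mul, hcast] at hbound
    nlinarith [hrow0]
  -- Rayleigh bound : sum of distances ≤ δ0 * n
  have hmax : ∀ i, e i ≤ δ0 := by
    intro i
    rcases hmem i with h | h | h
    · exact le_of_eq h
    · rw [h]; exact le_of_lt h10
    · rw [h]; exact le_of_lt (h21.trans h10)
  have hray : ∑ x, ∑ y, (G.dist x y : ℝ) ≤ δ0 * n := by
    have h1 : (fun _ : V => (1:ℝ)) ⬝ᵥ (A *ᵥ (fun _ : V => (1:ℝ)))
        = ∑ x, ∑ y, (G.dist x y : ℝ) := by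
      unfold dotProduct Matrix.mulVec dotProduct
      simp [hAdef, distMatrix]
    have h2 : (fun _ : V => (1:ℝ)) ⬝ᵥ (fun _ : V => (1:ℝ)) = (n : ℝ) := by
      unfold dotProduct
      simp [hn]
    have := quadform_le_sup_eig hA hmax (fun _ : V => (1:ℝ))
    rw [h1, h2] at this
    exact this
  have hδ0big : (n : ℝ) - 1 < δ0 := by
    nlinarith [hray, hStotal, (Nat.cast_pos (α := ℝ)).mpr hnpos]
  -- integrality
  set Dz : Matrix V V ℤ := Matrix.of (fun x y => (G.dist x y : ℤ)) with hDz
  have hmapA : Dz.map ⇑(Int.castRingHom ℝ) = A := by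
    ext x y
    simp [hDz, hAdef, distMatrix, Matrix.map_apply]
  have hPR : A.charpoly = Dz.charpoly.map (Int.castRingHom ℝ) := by
    rw [← hmapA, Matrix.charpoly_map]
  have hPmonic : Dz.charpoly.Monic := Matrix.charpoly_monic Dz
  have hds : distSpec G = Finset.univ.val.map e := rfl
  have hprod : A.charpoly = ((distSpec G).map (fun a => Polynomial.X - Polynomial.C a)).prod := by
    rw [charpoly_hermitian hA, Finset.prod_eq_multiset_prod, hds, Multiset.map_map]
    rfl
  have hroots : A.charpoly.roots = distSpec G := by
    rw [hprod]
    exact Polynomial.roots_multiset_prod_X_sub_C _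
  have hchar_ne : A.charpoly ≠ 0 := (Matrix.charpoly_monic A).ne_zero
  have hsplits : A.charpoly.Splits := by
    rw [charpoly_hermitian hA]
    exact Polynomial.Splits.prod (fun i _ => Polynomial.Splits.X_sub_C _)
  have hmemroot : ∀ δ : ℝ, (distSpec G).count δ ≠ 0 → Polynomial.IsRoot A.charpoly δ := by
    intro δ hδ
    have hmem' : δ ∈ A.charpoly.roots := by
      rw [hroots]
      exact Multiset.count_pos.mp (Nat.pos_of_ne_zero hδ)
    exact (Polynomial.mem_roots'.mp hmem').2
  have halgZ : algebraMap ℤ ℝ = Int.castRingHom ℝ := rfl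
  have hint : ∀ δ : ℝ, Polynomial.IsRoot A.charpoly δ → IsIntegral ℤ δ := by
    intro δ hδ
    refine ⟨Dz.charpoly, hPmonic, ?_⟩
    rw [← Polynomial.eval_map, halgZ, ← hPR]
    exact hδ
  have hint0 : IsIntegral ℤ δ0 := hint δ0 (hmemroot δ0 (by rw [h0]; omega))
  have hint1 : IsIntegral ℤ δ1 := hint δ1 (hmemroot δ1 (by rw [h1]; omega))
  have hint2 : IsIntegral ℤ δ2 := hint δ2 (hmemroot δ2 (by rw [h2]; omega))
  set Pq : Polynomial ℚ := Dz.charpoly.map (Int.castRingHom ℚ) with hPq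
  have hPqmonic : Pq.Monic := hPmonic.map _
  have hPqne : Pq ≠ 0 := hPqmonic.ne_zero
  have hPqR : Pq.map (algebraMap ℚ ℝ) = A.charpoly := by
    rw [hPq, Polynomial.map_map,
      RingHom.ext_int ((algebraMap ℚ ℝ).comp (Int.castRingHom ℚ)) (Int.castRingHom ℝ), ← hPR]
  have hPqsplits : (Pq.map (algebraMap ℚ ℝ)).Splits := by
    rw [hPqR]
    exact hsplits
  have hint0Q : IsIntegral ℚ δ0 := hint0.tower_top
  set μ := minpoly ℚ δ0 with hμdef
  have hμirr : Irreducible μ := minpoly.irreducible hint0Q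
  have hμmonic : μ.Monic := minpoly.monic hint0Q
  have hμdvd : μ ∣ Pq := by
    apply minpoly.dvd ℚ δ0
    have heq : Polynomial.aeval δ0 Pq = Polynomial.eval δ0 (Pq.map (algebraMap ℚ ℝ)) := by
      rw [Polynomial.aeval_def, Polynomial.eval_map]
    rw [heq, hPqR]
    exact hmemroot δ0 (by rw [h0]; omega)
  obtain ⟨a, g, hgnd, hfac⟩ := WfDvdMonoid.max_power_factor hPqne hμirr
  set μR := μ.map (algebraMap ℚ ℝ) with hμR
  set gR := g.map (algebraMap ℚ ℝ) with hgR
  have hfacR : A.charpoly = μR ^ a * gR := by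
    rw [← hPqR, hfac, Polynomial.map_mul, Polynomial.map_pow]
  have hμne : μ ≠ 0 := minpoly.ne_zero hint0Q
  have hμRne : μR ≠ 0 := Polynomial.map_ne_zero hμne
  have hgne : g ≠ 0 := fun h => hPqne (by rw [hfac, h, mul_zero])
  have hgRne : gR ≠ 0 := Polynomial.map_ne_zero hgne
  have hrootsfac : distSpec G = a • μR.roots + gR.roots := by
    rw [← hroots, hfacR, Polynomial.roots_mul (by rw [← hfacR]; exact hchar_ne),
      Polynomial.roots_pow]
  have hsepR : μR.Separable := hμirr.separable.map
  have hnodup : μR.roots.Nodup := Polynomial.nodup_roots hsepR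
  have hcount_eq : ∀ β ∈ μR.roots, (distSpec G).count β = a := by
    intro β hβ
    have hc1 : μR.roots.count β = 1 := Multiset.count_eq_one_of_mem hnodup hβ
    have hming : μ = minpoly ℚ β := by
      refine minpoly.eq_of_irreducible_of_monic hμirr ?_ hμmonic
      have heq : Polynomial.aeval β μ = Polynomial.eval β μR := by
        rw [Polynomial.aeval_def, Polynomial.eval_map]
      rw [heq]
      exact (Polynomial.mem_roots'.mp hβ).2
    have hcg : gR.roots.count β = 0 := by
      rw [Multiset.count_eq_zero]
      intro hmem'
      have hg0 : Polynomial.aeval β g = 0 := by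
        have heq : Polynomial.aeval β g = Polynomial.eval β gR := by
          rw [Polynomial.aeval_def, Polynomial.eval_map]
        rw [heq]
        exact (Polynomial.mem_roots'.mp hmem').2
      refine hgnd ?_
      rw [hming]
      exact minpoly.dvd ℚ β hg0
    rw [hrootsfac, Multiset.count_add, Multiset.count_nsmul, hc1, hcg]
    omega
  have hδ0root : δ0 ∈ μR.roots := by
    rw [Polynomial.mem_roots']
    refine ⟨hμRne, ?_⟩
    show Polynomial.eval δ0 μR = 0
    rw [hμR, Polynomial.eval_map, ← Polynomial.aeval_def, hμdef]
    exact minpoly.aeval ℚ δ0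
  have ha1 : a = 1 := by
    have hc := hcount_eq δ0 hδ0root
    rw [h0] at hc
    omega
  have hallδ0 : ∀ β ∈ μR.roots, β = δ0 := by
    intro β hβ
    have hc := hcount_eq β hβ
    rw [ha1] at hc
    by_contra hne
    by_cases hmem' : β ∈ distSpec G
    · have hmem'' : β ∈ ({δ0, δ1, δ2} : Finset ℝ) := by
        rw [← hspec]
        exact Multiset.mem_toFinset.mpr hmem'
      simp only [Finset.mem_insert, Finset.mem_singleton] at hmem''
      rcases hmem'' with h | h | h
      · exact hne h
      · rw [h, h1] at hc; omega
      · rw [h, h2] at hc; omega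
    · rw [Multiset.count_eq_zero_of_notMem hmem'] at hc
      omega
  have hμsplits : (μ.map (algebraMap ℚ ℝ)).Splits :=
    Polynomial.Splits.of_dvd hPqsplits (Polynomial.map_ne_zero hPqne) (Polynomial.map_dvd _ hμdvd)
  have hdeg : μ.natDegree = Multiset.card μR.roots := by
    rw [← Polynomial.natDegree_map (algebraMap ℚ ℝ)]; exact hμsplits.natDegree_eq_card_roots
  have hcardle : Multiset.card μR.roots ≤ 1 := by
    have hle : μR.roots ≤ {δ0} := by
      rw [Multiset.le_iff_count]
      intro x
      by_cases hx : x = δ0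
      · subst hx
        have := Multiset.nodup_iff_count_le_one.mp hnodup x
        simpa using this
      · have : μR.roots.count x = 0 := by
          rw [Multiset.count_eq_zero]
          intro hmemx
          exact hx (hallδ0 x hmemx)
        simp [this]
    simpa using Multiset.card_le_card hle
  have hdegpos : 0 < μ.natDegree := minpoly.natDegree_pos hint0Q
  have hrange : δ0 ∈ (algebraMap ℚ ℝ).range := minpoly.natDegree_eq_one_iff.mp (le_antisymm (by rw [hdeg]; exact hcardle) hdegpos)
  obtain ⟨q, hq⟩ := hrange
  have hmneR : (m : ℝ) ≠ 0 := Nat.cast_ne_zero.mpr (by omega)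
  have hmneQ : (m : ℚ) ≠ 0 := Nat.cast_ne_zero.mpr (by omega)
  have hsval : δ1 + δ2 = algebraMap ℚ ℝ (-q / (m : ℚ)) := by
    have hcast : algebraMap ℚ ℝ (-q / (m : ℚ)) = (-(algebraMap ℚ ℝ q)) / (m : ℝ) := by
      rw [map_div₀, map_neg, map_natCast]
    rw [hcast, hq]
    rw [eq_div_iff hmneR]
    linear_combination htrace
  have hsint : IsIntegral ℤ (δ1 + δ2) := hint1.add hint2
  have hsintq : IsIntegral ℤ ((-q / (m : ℚ))) := by
    apply (isIntegral_algebraMap_iff (algebraMap ℚ ℝ).injective).mp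
    rw [← hsval]
    exact hsint
  obtain ⟨z, hz⟩ := IsIntegrallyClosed.isIntegral_iff.mp hsintq
  have hzR : δ1 + δ2 = (z : ℝ) := by
    rw [hsval, ← hz, ← IsScalarTower.algebraMap_apply ℤ ℚ ℝ]
    exact eq_intCast (algebraMap ℤ ℝ) z
  refine ⟨-z, ?_, ?_⟩
  · have hδ0z : δ0 = (-z : ℤ) * (m : ℝ) := by
      push_cast
      linear_combination htrace - (m : ℝ) * hzR
    have h2m : (2 : ℝ) * m < δ0 := by
      have : ((n : ℕ) : ℝ) = 2 * m + 1 := by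
        rw [hncard]
        push_cast
        ring
      linarith [hδ0big]
    have hcgt : (2 : ℝ) < ((-z : ℤ) : ℝ) := by
      have hmpos : (0 : ℝ) < m := by positivity
      nlinarith [hδ0z]
    have : (2 : ℤ) < -z := by exact_mod_cast hcgt
    omega
  · have hcast : ((Fintype.card V : ℝ)) - 1 = 2 * m := by
      rw [← hn, hncard]
      push_cast
      ring
    rw [hcast]
    push_cast
    linear_combination htrace - (m : ℝ) * hzR
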